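/- Let A be a 4×4 symmetric matrix over ℂ and let α ∈ ℂ be a root of the characteristic polynomial of A of multiplicity at least 2. Then there exists a nonzero vector v ∈ ℂ⁴ with Av = α·v and vᵀv = 0. -/

import Mathlib

open Matrix Polynomial

lemma charpoly_shift (A : Matrix (Fin 4) (Fin 4) ℂ) (α : ℂ) :
    (A - α • 1).charpoly = (A.charpoly).comp (X + C α) := by
  rw [Matrix.charpoly, Matrix.charpoly]
  have : (A.charmatrix.det).comp (X + C α) = (eval₂RingHom C (X + C α)) A.charmatrix.det := rfl
  rw [this, RingHom.map_det]
  congr 1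
  ext i j
  by_cases hij : i = j <;>
    simp [charmatrix_apply, hij, Matrix.one_apply, Matrix.smul_apply, sub_sub_eq_add_sub]

lemma charpoly_mulVecLin (B : Matrix (Fin 4) (Fin 4) ℂ) :
    (Matrix.mulVecLin B).charpoly = B.charpoly := by
  rw [← LinearMap.charpoly_toMatrix (Matrix.mulVecLin B) (Pi.basisFun ℂ (Fin 4))]
  congr 1
  ext i j
  simp [LinearMap.toMatrix_apply, Matrix.mulVec, dotProduct, Pi.single_apply]

theorem multiple_root_gives_isotropic_eigenvector (A : Matrix (Fin 4) (Fin 4) ℂ)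
    (hA : A.IsSymm) (α : ℂ) (hmult : 2 ≤ A.charpoly.rootMultiplicity α) :
    ∃ v : Fin 4 → ℂ, v ≠ 0 ∧ A *ᵥ v = α • v ∧ v ⬝ᵥ v = 0 := by
  set B : Matrix (Fin 4) (Fin 4) ℂ := A - α • 1 with hB
  have hBsymm : Bᵀ = B := by
    rw [hB, Matrix.transpose_sub, Matrix.transpose_smul, Matrix.transpose_one, hA]
  set φ : Module.End ℂ (Fin 4 → ℂ) := Matrix.mulVecLin B with hφ
  -- eigenvector characterization
  have hker : ∀ v, φ v = 0 ↔ A *ᵥ v = α • v := by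
    intro v
    rw [hφ, Matrix.mulVecLin_apply, hB, Matrix.sub_mulVec, sub_eq_zero,
      Matrix.smul_mulVec, Matrix.one_mulVec]
  -- multiplicity transfer
  have hmult' : 2 ≤ natTrailingDegree φ.charpoly := by
    rw [hφ, _root_.charpoly_mulVecLin, charpoly_shift,
      ← Polynomial.rootMultiplicity_eq_natTrailingDegree']
    rwa [← Polynomial.rootMultiplicity_eq_rootMultiplicity]
  have hdim : 2 ≤ Module.finrank ℂ (φ.maxGenEigenspace 0) := by
    rw [LinearMap.finrank_maxGenEigenspace_zero_eq]; exact hmult'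
  by_cases hstab : LinearMap.ker (φ ^ 2) = LinearMap.ker φ
  · -- kernel is 2-dimensional; find isotropic vector in it
    have hle : ∀ k : ℕ, LinearMap.ker (φ ^ k) ≤ LinearMap.ker φ := by
      intro k
      induction k with
      | zero =>
        intro x hx
        rw [LinearMap.mem_ker] at hx ⊢
        simp only [pow_zero, Module.End.one_apply] at hx
        simp [hx]
      | succ k ih =>
        intro x hx
        have h1 : φ x ∈ LinearMap.ker (φ ^ k) := by
          rw [LinearMap.mem_ker] at hx ⊢
          rw [← Module.End.mul_apply, ← pow_succ]; exact hx
        have h2 : x ∈ LinearMap.ker (φ ^ 2) := by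
          rw [LinearMap.mem_ker, pow_two, Module.End.mul_apply]
          exact ih h1
        rw [hstab] at h2; exact h2
    have hEeq : φ.maxGenEigenspace 0 = LinearMap.ker φ := by
      apply le_antisymm
      · intro x hx
        rw [Module.End.mem_maxGenEigenspace] at hx
        obtain ⟨k, hk⟩ := hx
        simp only [zero_smul, sub_zero] at hk
        exact hle k hk
      · intro x hx
        rw [Module.End.mem_maxGenEigenspace]
        exact ⟨1, by simpa using hx⟩
    rw [hEeq] at hdim
    -- get two linearly independent vectors in the kernel
    obtain ⟨v, w, hv, hw, hli⟩ :
        ∃ v w : Fin 4 → ℂ, φ v = 0 ∧ φ w = 0 ∧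
          ∀ s t : ℂ, s • v + t • w = 0 → s = 0 ∧ t = 0 := by
      set E := LinearMap.ker φ
      let b := Module.finBasis ℂ E
      let i0 : Fin (Module.finrank ℂ E) := ⟨0, by omega⟩
      let i1 : Fin (Module.finrank ℂ E) := ⟨1, by omega⟩
      refine ⟨(b i0 : Fin 4 → ℂ), (b i1 : Fin 4 → ℂ), (b i0).2, (b i1).2, ?_⟩
      have h1 : LinearIndependent ℂ (⇑b ∘ ![i0, i1]) := by
        apply b.linearIndependent.comp ![i0, i1]
        intro x y hxy
        fin_cases x <;> fin_cases y <;> simp_all [i0, i1, Fin.ext_iff]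
      have h1' : LinearIndependent ℂ ![b i0, b i1] := by
        convert h1 using 1; ext i; fin_cases i <;> simp
      have h2 := h1'.map' E.subtype (Submodule.ker_subtype E)
      have hli : LinearIndependent ℂ ![(b i0 : Fin 4 → ℂ), (b i1 : Fin 4 → ℂ)] := by
        convert h2 using 1
        ext i
        fin_cases i <;> simp
        rfl
        rfl
      exact fun s t hst => LinearIndependent.pair_iff.mp hli s t hst
    -- find isotropic combination
    by_cases hww : w ⬝ᵥ w = 0
    · exact ⟨w, fun h => by simpa using (hli 0 1 (by simp [h])).2,
        (hker w).mp hw, hww⟩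
    · obtain ⟨s, hs⟩ := IsAlgClosed.exists_pow_nat_eq ((v ⬝ᵥ w) ^ 2 - (v ⬝ᵥ v) * (w ⬝ᵥ w)) (n := 2)
        (by norm_num)
      refine ⟨v + ((-(v ⬝ᵥ w) + s) / (w ⬝ᵥ w)) • w, ?_, ?_, ?_⟩
      · intro h
        have := (hli 1 ((-(v ⬝ᵥ w) + s) / (w ⬝ᵥ w)) (by rw [one_smul]; exact h)).1
        simp at this
      · apply (hker _).mp
        simp only [map_add, LinearMap.map_smul, hv, hw, smul_zero, add_zero]
      · have expand : (v + ((-(v ⬝ᵥ w) + s) / (w ⬝ᵥ w)) • w) ⬝ᵥ (v + ((-(v ⬝ᵥ w) + s) / (w ⬝ᵥ w)) • w)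
            = v ⬝ᵥ v + 2 * ((-(v ⬝ᵥ w) + s) / (w ⬝ᵥ w)) * (v ⬝ᵥ w)
              + ((-(v ⬝ᵥ w) + s) / (w ⬝ᵥ w)) ^ 2 * (w ⬝ᵥ w) := by
          simp [add_dotProduct, dotProduct_add, smul_dotProduct,
            dotProduct_smul, dotProduct_comm w v, smul_eq_mul]
          ring
        rw [expand]
        field_simp
        linear_combination hs
  · -- generalized eigenvector exists
    have hlt : LinearMap.ker φ < LinearMap.ker (φ ^ 2) := by
      refine lt_of_le_of_ne ?_ (Ne.symm hstab)
      intro x hx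
      rw [LinearMap.mem_ker] at hx ⊢
      rw [pow_two, Module.End.mul_apply, hx, map_zero]
    obtain ⟨u, hu2, hu1⟩ := SetLike.exists_of_lt hlt
    refine ⟨φ u, fun h => hu1 (by simpa using h), (hker _).mp ?_, ?_⟩
    · rw [← Module.End.mul_apply, ← pow_two]
      exact hu2
    · -- isotropy from symmetry
      have hv : B *ᵥ (B *ᵥ u) = 0 := by
        have := LinearMap.mem_ker.mp hu2
        rw [pow_two, Module.End.mul_apply] at this
        simpa [hφ] using this
      calc (φ u) ⬝ᵥ (φ u) = (B *ᵥ u) ⬝ᵥ (B *ᵥ u) := rfl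
        _ = ((B *ᵥ u) ᵥ* B) ⬝ᵥ u := by rw [Matrix.dotProduct_mulVec]
        _ = (Bᵀ *ᵥ (B *ᵥ u)) ⬝ᵥ u := by rw [Matrix.mulVec_transpose]
        _ = (0 : Fin 4 → ℂ) ⬝ᵥ u := by rw [hBsymm, hv]
        _ = 0 := zero_dotProduct u
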